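/- Let m be an odd positive integer. Then #D_2 = 2^m(2^{m−1} − 1), where D_2 = {(x,y) ∈ F_{2^m}^* × F_{2^m} : Tr(yx² + x + y) = 0}. -/

import Mathlib

attribute [local instance] Classical.propDecidable

noncomputable instance (m : ℕ) : Fintype (GaloisField 2 m) := Fintype.ofFinite _

/-- The absolute trace map from `F_{2^m}` to `F_2`. -/
noncomputable def Tr (m : ℕ) (x : GaloisField 2 m) : ZMod 2 :=
  Algebra.trace (ZMod 2) (GaloisField 2 m) x

/-- For `t ∈ F_2`, `sgn t` is the integer `(-1)^t`. -/
def sgn : ZMod 2 → ℤ := fun t => if t = 0 then 1 else -1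

/-- The set `Υ₁ = {r + r⁻¹ : r ∈ F_{2^m}^*, r ≠ 1}`. -/
def Ups1 (m : ℕ) : Set (GaloisField 2 m) :=
  {u | ∃ r : GaloisField 2 m, r ≠ 0 ∧ r ≠ 1 ∧ u = r + r⁻¹}

theorem stmt9 (m : ℕ) (hm : 0 < m) (hodd : Odd m) :
    (Finset.univ.filter (fun p : GaloisField 2 m × GaloisField 2 m =>
        p.1 ≠ 0 ∧ Tr m (p.2 * p.1 ^ 2 + p.1 + p.2) = 0)).card =
      2 ^ m * (2 ^ (m - 1) - 1) := by
  classical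
  have hm0 : m ≠ 0 := hm.ne'
  have hcard : Fintype.card (GaloisField 2 m) = 2 ^ m := by
    rw [← Nat.card_eq_fintype_card]; exact GaloisField.card 2 m hm0
  have hchar : (2 : GaloisField 2 m) = 0 := by
    have := (inferInstance : CharP (GaloisField 2 m) 2)
    exact CharP.cast_eq_zero (GaloisField 2 m) 2
  -- trace of 1 is 1
  have hTr1 : Tr m 1 = 1 := by
    have h1 : Tr m 1 = Algebra.trace (ZMod 2) (GaloisField 2 m)
        (algebraMap (ZMod 2) (GaloisField 2 m) 1) := by
      simp [Tr]
    rw [h1, Algebra.trace_algebraMap, GaloisField.finrank 2 hm0]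
    have hm2 : ((m : ℕ) : ZMod 2) = 1 := by
      have h := Nat.odd_iff.mp hodd
      rw [← ZMod.natCast_mod, h]; rfl
    rw [nsmul_eq_mul, hm2, mul_one]
  -- kernel of trace has 2^(m-1) elements
  have hker : (Finset.univ.filter fun z : GaloisField 2 m => Tr m z = 0).card
      = 2 ^ (m - 1) := by
    have hTradd : ∀ a b : GaloisField 2 m, Tr m (a + b) = Tr m a + Tr m b := by
      intro a b; simp [Tr, map_add]
    have hbij : (Finset.univ.filter fun z : GaloisField 2 m => Tr m z = 0).card
        = (Finset.univ.filter fun z : GaloisField 2 m => Tr m z = 1).card := by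
      refine Finset.card_nbij' (fun z => z + 1) (fun z => z + 1) ?_ ?_ ?_ ?_
      · intro z hz
        simp only [Finset.mem_coe, Finset.mem_filter, Finset.mem_univ, true_and] at hz ⊢
        rw [hTradd, hz, hTr1]; ring
      · intro z hz
        simp only [Finset.mem_coe, Finset.mem_filter, Finset.mem_univ, true_and] at hz ⊢
        rw [hTradd, hz, hTr1]; decide
      · intro z _; have : (1 : GaloisField 2 m) + 1 = 0 := by
          have := hchar; linear_combination this
        simp [add_assoc, this]
      · intro z _; have : (1 : GaloisField 2 m) + 1 = 0 := by
          have := hchar; linear_combination this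
        simp [add_assoc, this]
    have hsplit : (Finset.univ.filter fun z : GaloisField 2 m => Tr m z = 0).card
        + (Finset.univ.filter fun z : GaloisField 2 m => Tr m z = 1).card
        = 2 ^ m := by
      have hsum := Finset.card_filter_add_card_filter_not
        (s := (Finset.univ : Finset (GaloisField 2 m)))
        (p := fun z => Tr m z = 0)
      have heq : (Finset.univ.filter fun z : GaloisField 2 m => ¬ Tr m z = 0)
          = Finset.univ.filter fun z : GaloisField 2 m => Tr m z = 1 := by
        apply Finset.filter_congr
        intro z _
        have h2 : ∀ t : ZMod 2, ¬ t = 0 ↔ t = 1 := by decide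
        exact h2 _
      rw [heq, Finset.card_univ, hcard] at hsum
      exact hsum
    have h2m : 2 ^ m = 2 * 2 ^ (m - 1) := by
      conv_lhs => rw [show m = (m - 1) + 1 by omega]
      ring
    omega
  -- fiberwise count
  set P : GaloisField 2 m × GaloisField 2 m → Prop :=
    fun p => p.1 ≠ 0 ∧ Tr m (p.2 * p.1 ^ 2 + p.1 + p.2) = 0 with hP
  have hfib : ∀ x : GaloisField 2 m,
      ((Finset.univ.filter P).filter fun p => p.1 = x).card
      = (Finset.univ.filter fun y => x ≠ 0 ∧
          Tr m (y * x ^ 2 + x + y) = 0).card := by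
    intro x
    refine Finset.card_nbij' (fun p => p.2) (fun y => (x, y)) ?_ ?_ ?_ ?_
    · intro p hp
      simp only [Finset.mem_coe, Finset.mem_filter, Finset.mem_univ, true_and, hP] at hp ⊢
      obtain ⟨⟨h1, h2⟩, h3⟩ := hp
      subst h3; exact ⟨h1, h2⟩
    · intro y hy
      simp only [Finset.mem_coe, Finset.mem_filter, Finset.mem_univ, true_and, hP] at hy ⊢
      exact ⟨hy, trivial⟩
    · intro p hp
      simp only [Finset.mem_coe, Finset.mem_filter] at hp
      rw [← hp.2]
    · intro y _; rfl
  have key : ∀ x : GaloisField 2 m,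
      (Finset.univ.filter fun y => x ≠ 0 ∧ Tr m (y * x ^ 2 + x + y) = 0).card
      = if x = 0 ∨ x = 1 then 0 else 2 ^ (m - 1) := by
    intro x
    by_cases hx0 : x = 0
    · simp [hx0]
    by_cases hx1 : x = 1
    · subst hx1
      rw [if_pos (Or.inr rfl)]
      rw [Finset.card_eq_zero, Finset.filter_eq_empty_iff]
      intro y _
      rintro ⟨-, h⟩
      have : y * 1 ^ 2 + 1 + y = 1 := by
        have h2 : (2 : GaloisField 2 m) = 0 := hchar
        linear_combination y * h2
      rw [this, hTr1] at h
      exact one_ne_zero h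
    · rw [if_neg (by tauto)]
      rw [← hker]
      have hc : x ^ 2 + 1 ≠ 0 := by
        intro h
        have h2 : (2 : GaloisField 2 m) = 0 := hchar
        have hx : (x + 1) ^ 2 = 0 := by linear_combination h + x * h2
        have := pow_eq_zero_iff (n := 2) (by norm_num) |>.mp hx
        exact hx1 (by linear_combination this - h2)
      refine Finset.card_nbij' (fun y => y * (x ^ 2 + 1) + x)
        (fun z => (z + x) * (x ^ 2 + 1)⁻¹) ?_ ?_ ?_ ?_
      · intro y hy
        simp only [Finset.mem_coe, Finset.mem_filter, Finset.mem_univ, true_and] at hy ⊢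
        have : y * (x ^ 2 + 1) + x = y * x ^ 2 + x + y := by ring
        rw [this]; exact hy.2
      · intro z hz
        simp only [Finset.mem_coe, Finset.mem_filter, Finset.mem_univ, true_and] at hz ⊢
        refine ⟨hx0, ?_⟩
        have h2 : (2 : GaloisField 2 m) = 0 := hchar
        have : (z + x) * (x ^ 2 + 1)⁻¹ * x ^ 2 + x + (z + x) * (x ^ 2 + 1)⁻¹ = z := by
          field_simp
          linear_combination (x ^ 3 + x) * h2
        rw [this]; exact hz
      · intro y _
        have h2 : (2 : GaloisField 2 m) = 0 := hchar
        field_simp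
        linear_combination x * h2
        
      · intro z _
        have h2 : (2 : GaloisField 2 m) = 0 := hchar
        field_simp
        linear_combination x * h2
  -- assemble
  rw [Finset.card_eq_sum_card_fiberwise
    (f := Prod.fst) (t := Finset.univ) (fun _ _ => Finset.mem_univ _)]
  have : ∀ x : GaloisField 2 m,
      ((Finset.univ.filter P).filter fun p => p.1 = x).card
      = if x = 0 ∨ x = 1 then 0 else 2 ^ (m - 1) := fun x => (hfib x).trans (key x)
  rw [Finset.sum_congr rfl (fun x _ => this x)]
  rw [Finset.sum_ite, Finset.sum_const, Finset.sum_const]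
  have h01 : (Finset.univ.filter fun x : GaloisField 2 m => x = 0 ∨ x = 1)
      = {0, 1} := by
    ext x; simp [Finset.mem_insert]
  have hne : (0 : GaloisField 2 m) ≠ 1 := zero_ne_one
  have hcard01 : (Finset.univ.filter fun x : GaloisField 2 m => x = 0 ∨ x = 1).card = 2 := by
    rw [h01]; rw [Finset.card_insert_of_notMem (by simp [hne]), Finset.card_singleton]
  have hcardnot : (Finset.univ.filter fun x : GaloisField 2 m => ¬(x = 0 ∨ x = 1)).card
      = 2 ^ m - 2 := by
    have := Finset.card_filter_add_card_filter_not
      (s := (Finset.univ : Finset (GaloisField 2 m)))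
      (p := fun x => x = 0 ∨ x = 1)
    rw [hcard01, Finset.card_univ, hcard] at this
    omega
  rw [hcardnot]
  have h2m : 2 ^ m = 2 * 2 ^ (m - 1) := by
    conv_lhs => rw [show m = (m - 1) + 1 by omega]
    ring
  have hge : 1 ≤ 2 ^ (m - 1) := Nat.one_le_two_pow
  simp only [smul_eq_mul, mul_zero, add_zero]
  rw [h2m]
  set a := 2 ^ (m - 1)
  rw [Nat.sub_mul, Nat.mul_sub]
  ring_nf
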